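/- For every clutter M = (E, 𝒜) and every v ∈ E, b(M / v) = b(M) \ v. -/

import Mathlib

open Set

/-- A clutter: a finite ground set together with an antichain of subsets (rows). -/
structure Clutter (α : Type*) where
  E : Set α
  E_finite : E.Finite
  rows : Set (Set α)
  rows_subset : ∀ A ∈ rows, A ⊆ E
  antichain : ∀ A ∈ rows, ∀ B ∈ rows, A ⊆ B → A = B

variable {α : Type*}

/-- Deletion of an element of a clutter. -/
def Clutter.delete (M : Clutter α) (v : α) : Clutter α where
  E := M.E \ {v}
  E_finite := M.E_finite.sdiff
  rows := {A | A ∈ M.rows ∧ v ∉ A}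
  rows_subset := fun A hA => subset_diff_singleton (M.rows_subset A hA.1) hA.2
  antichain := fun A hA B hB h => M.antichain A hA.1 B hB.1 h

/-- Contraction of an element of a clutter. -/
def Clutter.contract (M : Clutter α) (v : α) : Clutter α where
  E := M.E \ {v}
  E_finite := M.E_finite.sdiff
  rows := {A | A ∈ (fun B => B \ {v}) '' M.rows ∧
    ∀ B ∈ (fun B => B \ {v}) '' M.rows, B ⊆ A → B = A}
  rows_subset := by
    rintro A ⟨⟨B, hB, rfl⟩, -⟩
    exact diff_subset_diff_left (M.rows_subset B hB)
  antichain := fun A hA B hB hAB => hB.2 A hA.1 hAB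

/-- A separation of a clutter: a partition of the ground set into two non-empty
parts such that every row lies in one of the parts. -/
def Clutter.IsSeparation (M : Clutter α) (X Y : Set α) : Prop :=
  X.Nonempty ∧ Y.Nonempty ∧ Disjoint X Y ∧ X ∪ Y = M.E ∧
    ∀ A ∈ M.rows, A ⊆ X ∨ A ⊆ Y

/-- A clutter is connected if it admits no separation. -/
def Clutter.Connected (M : Clutter α) : Prop := ¬ ∃ X Y, M.IsSeparation X Y
/-- A transversal (blocking set): a subset of the ground set meeting every row. -/
def Clutter.IsTransversal (M : Clutter α) (B : Set α) : Prop :=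
  B ⊆ M.E ∧ ∀ A ∈ M.rows, (B ∩ A).Nonempty

/-- The blocker of a clutter: rows are the inclusion-minimal transversals. -/
def Clutter.blocker (M : Clutter α) : Clutter α where
  E := M.E
  E_finite := M.E_finite
  rows := {B | M.IsTransversal B ∧ ∀ C, M.IsTransversal C → C ⊆ B → C = B}
  rows_subset := fun B hB => hB.1.1
  antichain := fun A hA B hB h => hB.2 A hA.1 h


lemma Clutter.ext' {M N : Clutter α} (hE : M.E = N.E) (hr : M.rows = N.rows) : M = N := by
  cases M; cases N; simp_all

lemma Clutter.contract_exists_min (M : Clutter α) (v : α) {A : Set α} (hA : A ∈ M.rows) :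
    ∃ C ∈ (M.contract v).rows, C ⊆ A \ {v} := by
  set S : Set (Set α) := {B ∈ (fun B => B \ {v}) '' M.rows | B ⊆ A \ {v}} with hS
  have hfin : S.Finite := by
    apply Set.Finite.subset ((M.E_finite.subset (M.rows_subset A hA)).diff (t := {v})).finite_subsets
    intro B hB; exact hB.2
  have hne : S.Nonempty := ⟨A \ {v}, ⟨A, hA, rfl⟩, le_refl _⟩
  obtain ⟨C, hC, hmin⟩ : ∃ C ∈ S, ∀ B ∈ S, B ⊆ C → C = B := by
    obtain ⟨C, hC⟩ := hfin.exists_minimal hne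
    exact ⟨C, hC.prop, fun B hB h => (hC.eq_of_le hB h).symm⟩
  refine ⟨C, ⟨hC.1, ?_⟩, hC.2⟩
  intro B hB hBC
  exact (hmin B ⟨hB, hBC.trans hC.2⟩ hBC).symm

lemma Clutter.contract_transversal (M : Clutter α) (v : α) (B : Set α) :
    (M.contract v).IsTransversal B ↔ M.IsTransversal B ∧ v ∉ B := by
  constructor
  · rintro ⟨hBE, hmeet⟩
    have hvB : v ∉ B := fun h => (hBE h).2 rfl
    refine ⟨⟨fun x hx => (hBE hx).1, ?_⟩, hvB⟩
    intro A hA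
    obtain ⟨C, hC, hCA⟩ := M.contract_exists_min v hA
    obtain ⟨x, hx1, hx2⟩ := hmeet C hC
    exact ⟨x, hx1, (hCA hx2).1⟩
  · rintro ⟨⟨hBE, hmeet⟩, hvB⟩
    refine ⟨fun x hx => ⟨hBE hx, fun h => hvB (h ▸ hx)⟩, ?_⟩
    rintro A' ⟨⟨A, hA, rfl⟩, -⟩
    obtain ⟨x, hx1, hx2⟩ := hmeet A hA
    exact ⟨x, hx1, hx2, fun h => hvB (h ▸ hx1)⟩

theorem blocker_contract (M : Clutter α) (v : α) (hv : v ∈ M.E) :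
    (M.contract v).blocker = M.blocker.delete v := by
  apply Clutter.ext'
  · rfl
  ext B
  show ((M.contract v).IsTransversal B ∧ _) ↔ (M.IsTransversal B ∧ _) ∧ v ∉ B
  rw [M.contract_transversal v B]
  constructor
  · rintro ⟨⟨hT, hvB⟩, hmin⟩
    refine ⟨⟨hT, fun C hC hCB => ?_⟩, hvB⟩
    have hvC : v ∉ C := fun h => hvB (hCB h)
    exact hmin C ((M.contract_transversal v C).mpr ⟨hC, hvC⟩) hCB
  · rintro ⟨⟨hT, hmin⟩, hvB⟩
    refine ⟨⟨hT, hvB⟩, fun C hC hCB => ?_⟩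
    exact hmin C ((M.contract_transversal v C).mp hC).1 hCB
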